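/- arXiv:2006.05023 — 2 statements merged into one kernel-verified Lean document; each statement's English description precedes it below -/
import Mathlib

section
/- Suppose the cumulative probability of the $t$ most likely passwords follows Zipf's law $\lambda_t = y t^r$ with $0 < r \le 1$, $y > 0$, and let $0 < a \le 1$. Let $Z = \lceil (1/y)^{1/r} \rceil + 1$ and $T(y,r,a) = \max_{2 \le t \le Z} \frac{1 - y(t-1)^r}{y^a (ra) t^{ra-1}}$. If $v/k \ge T(y,r,a)$, then for every integer $t \ge 2$ with $y(t-1)^r \le 1$, the marginal revenue $MR(t) = v(y^a t^{ra} - y^a (t-1)^{ra})$ is at least the marginal cost $MC(t) = k(1 - y(t-1)^r)$; hence a rational attacker never stops guessing. -/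
open Real Finset

/-- if `v/k` is at least the threshold `T(y,r,a)` (the maximum of
`(1 - y(t-1)^r)/(y^a (ra) t^{ra-1})` over `2 ≤ t ≤ Z` with `Z = ⌈(1/y)^(1/r)⌉ + 1`),
then for every integer `t ≥ 2` with `y(t-1)^r ≤ 1`, marginal revenue
`MR(t) = v(y^a t^{ra} - y^a (t-1)^{ra})` is at least marginal cost
`MC(t) = k(1 - y(t-1)^r)`: the rational attacker never stops guessing. -/
theorem stmt_2 (v k r a y : ℝ) (hv : 0 < v) (hk : 0 < k)
    (hr : 0 < r) (hr1 : r ≤ 1) (ha : 0 < a) (ha1 : a ≤ 1) (hy : 0 < y)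
    (Z : ℕ) (hZ : (Z : ℝ) = ⌈(1 / y) ^ (1 / r)⌉ + 1)
    (hT : ∀ t ∈ Finset.Icc 2 Z,
      v / k ≥ (1 - y * ((t : ℝ) - 1) ^ r) / (y ^ a * (r * a) * (t : ℝ) ^ (r * a - 1))) :
    ∀ t : ℕ, 2 ≤ t → y * ((t : ℝ) - 1) ^ r ≤ 1 →
      v * (y ^ a * (t : ℝ) ^ (r * a) - y ^ a * ((t : ℝ) - 1) ^ (r * a))
        ≥ k * (1 - y * ((t : ℝ) - 1) ^ r) := by
  intro t ht hle
  set T : ℝ := (t : ℝ) with hTdef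
  have hT2 : (2 : ℝ) ≤ T := by rw [hTdef]; exact_mod_cast ht
  have hT0 : 0 < T := by linarith
  have hT1 : 0 ≤ T - 1 := by linarith
  set p : ℝ := r * a with hpdef
  have hp0 : 0 < p := mul_pos hr ha
  have hp1 : p ≤ 1 := by nlinarith
  -- Step A: t ≤ Z
  have htZ : t ≤ Z := by
    have h1 : (T - 1) ^ r ≤ 1 / y := by
      rw [le_div_iff₀ hy]; linarith [hle]
    have h2 : T - 1 ≤ (1 / y) ^ (1 / r) := by
      have := Real.rpow_le_rpow (Real.rpow_nonneg hT1 r) h1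
        (le_of_lt (by positivity : (0:ℝ) < 1 / r))
      rwa [← Real.rpow_mul hT1, mul_one_div, div_self hr.ne',
        Real.rpow_one] at this
    have h3 : T - 1 ≤ (⌈(1 / y) ^ (1 / r)⌉ : ℝ) := h2.trans (Int.le_ceil _)
    have h4 : T ≤ (Z : ℝ) := by rw [hZ]; linarith
    rw [hTdef] at h4; exact_mod_cast h4
  have hmem : t ∈ Finset.Icc 2 Z := Finset.mem_Icc.mpr ⟨ht, htZ⟩
  have hkey := hT t hmem
  -- Denominator positive
  have hD : 0 < y ^ a * (r * a) * T ^ (p - 1) := by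
    have : 0 < T ^ (p - 1) := Real.rpow_pos_of_pos hT0 _
    positivity
  -- Step B: v * D ≥ k * (1 - y(T-1)^r)
  have hB : v * (y ^ a * (r * a) * T ^ (p - 1)) ≥ k * (1 - y * (T - 1) ^ r) := by
    rw [ge_iff_le, div_le_div_iff₀ hD hk] at hkey
    linarith
  -- Step C: Bernoulli-type bound: T^p - (T-1)^p ≥ p * T^(p-1)
  have hC : T ^ p - (T - 1) ^ p ≥ p * T ^ (p - 1) := by
    have hs : (-1 : ℝ) ≤ -1 / T := by
      rw [neg_div, neg_le_neg_iff, div_le_one hT0]; linarith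
    have hb := rpow_one_add_le_one_add_mul_self hs hp0.le hp1
    have hts : (1 + -1 / T) = (T - 1) / T := by field_simp; ring
    rw [hts] at hb
    have hdiv : (T - 1) ^ p = T ^ p * ((T - 1) / T) ^ p := by
      rw [← Real.mul_rpow hT0.le (by positivity)]
      congr 1; field_simp
    have hTp : 0 < T ^ p := Real.rpow_pos_of_pos hT0 _
    have h5 : (T - 1) ^ p ≤ T ^ p * (1 + p * (-1 / T)) := by
      rw [hdiv]; exact mul_le_mul_of_nonneg_left hb hTp.le
    have h6 : T ^ p * (1 + p * (-1 / T)) = T ^ p - p * T ^ (p - 1) := by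
      have : T ^ (p - 1) = T ^ p / T := by
        rw [Real.rpow_sub hT0, Real.rpow_one]
      rw [this]; field_simp; ring
    rw [h6] at h5; linarith
  -- Combine
  have hya : 0 < y ^ a := Real.rpow_pos_of_pos hy a
  have hC' : v * (y ^ a * T ^ p - y ^ a * (T - 1) ^ p)
      ≥ v * (y ^ a * (r * a) * T ^ (p - 1)) := by
    have h7 : y ^ a * T ^ p - y ^ a * (T - 1) ^ p ≥ y ^ a * (r * a) * T ^ (p - 1) := by
      have := mul_le_mul_of_nonneg_left hC hya.le
      rw [mul_sub] at this
      calc y ^ a * (r * a) * T ^ (p - 1) = y ^ a * (p * T ^ (p - 1)) := by rw [hpdef]; ring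
        _ ≤ _ := this
    exact mul_le_mul_of_nonneg_left h7 hv.le
  linarith [hB, hC']
end

section
/- In a competitive cracking setting where an attacker's reward is scaled by the probability $p_{\text{first}} \in [0,1]$ of being first, the fraction of passwords cracked by some attacker satisfies $\mathbf{CompCrack}(v, a) \ge \min_{0 \le p \le 1} \max\{\mathbf{Cracked}(pv, a),\ 1 - p\}$, assuming: (i) an attacker facing first-mover probability $p$ cracks at least the fraction $\mathbf{Cracked}(pv, a)$ (since his effective value is at least $pv$), and (ii) with probability $1-p$ another attacker has already cracked the account. -/
open Real

/-- competitive cracking bound.  If the focal attacker is first with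
probability `p ∈ [0,1]`, cracks at least the non-competitive fraction `Cracked(p·v)`
(since his effective value is at least `p·v`), and with probability `1-p` another attacker
already cracked the account, then
`CompCrack(v,a) ≥ min_{0 ≤ q ≤ 1} max{Cracked(q·v), 1-q}`. -/
theorem stmt_15 (v : ℝ) (hv : 0 < v) (Cracked : ℝ → ℝ) (CompCrack : ℝ)
    (hmono : Monotone Cracked) (hnonneg : ∀ x, 0 ≤ Cracked x)
    (p : ℝ) (hp0 : 0 ≤ p) (hp1 : p ≤ 1)
    (hfirst : CompCrack ≥ Cracked (p * v))
    (hother : CompCrack ≥ 1 - p) :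
    CompCrack ≥ ⨅ q : Set.Icc (0 : ℝ) 1, max (Cracked ((q : ℝ) * v)) (1 - (q : ℝ)) := by
  have hbdd : BddBelow (Set.range fun q : Set.Icc (0:ℝ) 1 =>
      max (Cracked ((q : ℝ) * v)) (1 - (q : ℝ))) := by
    refine ⟨0, ?_⟩
    rintro x ⟨q, rfl⟩
    exact le_trans (hnonneg _) (le_max_left _ _)
  refine le_trans (ciInf_le hbdd ⟨p, hp0, hp1⟩) ?_
  exact max_le hfirst hother
end
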